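/- Let z : ℝ → ℂ be a function such that lim_{t→∞} z(t)/(1 + |z(t)|) exists in ℂ, and suppose the imaginary part Im z(t) is eventually bounded, i.e. there exist M > 0 and t₀ such that |Im z(t)| ≤ M for all t ≥ t₀. Then exactly one of the following holds: (a) Re z(t) → +∞ as t → ∞; (b) Re z(t) → −∞ as t → ∞; (c) z(t) converges in ℂ as t → ∞. -/

import Mathlib

open Complex Filter Topology

/-- If `lim_{t→∞} z(t)/(1+|z(t)|)` exists and `Im z(t)` is eventually bounded, then exactly
one of the following holds: `Re z(t) → +∞`, `Re z(t) → −∞`, or `z(t)` converges in `ℂ`. -/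
theorem stmt4 (z : ℝ → ℂ)
    (hconv : ∃ w : ℂ, Tendsto (fun t => z t / (1 + (‖z t‖ : ℂ))) atTop (𝓝 w))
    (hIm : ∃ M : ℝ, 0 < M ∧ ∃ t₀ : ℝ, ∀ t ≥ t₀, |(z t).im| ≤ M) :
    (Tendsto (fun t => (z t).re) atTop atTop ∧
      ¬ Tendsto (fun t => (z t).re) atTop atBot ∧ ¬ (∃ l : ℂ, Tendsto z atTop (𝓝 l))) ∨
    (Tendsto (fun t => (z t).re) atTop atBot ∧
      ¬ Tendsto (fun t => (z t).re) atTop atTop ∧ ¬ (∃ l : ℂ, Tendsto z atTop (𝓝 l))) ∨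
    ((∃ l : ℂ, Tendsto z atTop (𝓝 l)) ∧
      ¬ Tendsto (fun t => (z t).re) atTop atTop ∧
      ¬ Tendsto (fun t => (z t).re) atTop atBot) := by
  obtain ⟨w, hw⟩ := hconv
  obtain ⟨M, hM, t₀, hbd⟩ := hIm
  set r : ℝ → ℝ := fun t => ‖z t‖ with hrdef
  have hr0 : ∀ t, 0 ≤ r t := fun t => norm_nonneg _
  have h1r : ∀ t, (0:ℝ) < 1 + r t := fun t => by have := hr0 t; linarith
  -- rewrite the denominator as a real cast
  have hden : ∀ t, (1 + (‖z t‖ : ℂ)) = ((1 + r t : ℝ) : ℂ) := by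
    intro t; push_cast; rfl
  have hw' : Tendsto (fun t => z t / ((1 + r t : ℝ) : ℂ)) atTop (𝓝 w) := by
    simpa only [hden] using hw
  -- the modulus quotient tends to |w|
  have hquot : Tendsto (fun t => r t / (1 + r t)) atTop (𝓝 ‖w‖) := by
    have h := (continuous_norm.tendsto w).comp hw'
    have heq : (fun t => ‖z t / ((1 + r t : ℝ) : ℂ)‖) =
        fun t => r t / (1 + r t) := by
      funext t
      rw [norm_div, Complex.norm_real, Real.norm_eq_abs, abs_of_pos (h1r t)]
    simp only [Function.comp_def] at h
    rwa [heq] at h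
  -- |w| ≤ 1
  have hwle : ‖w‖ ≤ 1 := by
    refine le_of_tendsto hquot (Eventually.of_forall fun t => ?_)
    rw [div_le_one (h1r t)]; linarith
  -- 1/(1+r) → 1 - |w|
  have hinv : Tendsto (fun t => (1 + r t)⁻¹) atTop (𝓝 (1 - ‖w‖)) := by
    have h := (tendsto_const_nhds (x := (1:ℝ))).sub hquot
    have heq : (fun t => 1 - r t / (1 + r t)) = fun t => (1 + r t)⁻¹ := by
      funext t
      rw [one_sub_div (h1r t).ne', add_sub_cancel_right, one_div]
    rw [heq] at h; exact h
  rcases lt_or_eq_of_le hwle with hlt | heq1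
  · -- |w| < 1 : z converges
    have hne : (1 - ‖w‖) ≠ 0 := by linarith
    have h1rlim : Tendsto (fun t => 1 + r t) atTop (𝓝 (1 - ‖w‖)⁻¹) := by
      have := hinv.inv₀ hne
      simpa using this
    have hz : Tendsto z atTop (𝓝 (w * (((1 - ‖w‖)⁻¹ : ℝ) : ℂ))) := by
      have h2 : Tendsto (fun t => ((1 + r t : ℝ) : ℂ)) atTop
          (𝓝 (((1 - ‖w‖)⁻¹ : ℝ) : ℂ)) :=
        (Complex.continuous_ofReal.tendsto _).comp h1rlim
      have h3 := hw'.mul h2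
      have heq : (fun t => z t / ((1 + r t : ℝ) : ℂ) * ((1 + r t : ℝ) : ℂ)) = z := by
        funext t
        have hne' : ((1 + r t : ℝ) : ℂ) ≠ 0 := by
          exact_mod_cast (h1r t).ne'
        rw [div_mul_cancel₀ _ hne']
      rwa [heq] at h3
    have hre : Tendsto (fun t => (z t).re) atTop
        (𝓝 ((w * (((1 - ‖w‖)⁻¹ : ℝ) : ℂ)).re)) :=
      (Complex.continuous_re.tendsto _).comp hz
    exact Or.inr (Or.inr ⟨⟨_, hz⟩, hre.not_tendsto (disjoint_nhds_atTop _),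
      hre.not_tendsto (disjoint_nhds_atBot _)⟩)
  · -- |w| = 1
    have hinv0 : Tendsto (fun t => (1 + r t)⁻¹) atTop (𝓝 0) := by
      rw [heq1] at hinv; simpa using hinv
    -- 1 + r → ∞
    have h1rtop : Tendsto (fun t => 1 + r t) atTop atTop := by
      have hpos : Tendsto (fun t => (1 + r t)⁻¹) atTop (𝓝[>] 0) :=
        tendsto_nhdsWithin_of_tendsto_nhds_of_eventually_within _ hinv0
          (Eventually.of_forall fun t => Set.mem_Ioi.mpr (inv_pos.mpr (h1r t)))
      have := hpos.inv_tendsto_nhdsGT_zero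
      simpa [Pi.inv_def] using this
    -- Im w = 0
    have him : w.im = 0 := by
      have h1 : Tendsto (fun t => (z t / ((1 + r t : ℝ) : ℂ)).im) atTop (𝓝 w.im) :=
        (Complex.continuous_im.tendsto _).comp hw'
      have h2 : Tendsto (fun t => (z t / ((1 + r t : ℝ) : ℂ)).im) atTop (𝓝 0) := by
        apply squeeze_zero_norm' (a := fun t => M * (1 + r t)⁻¹)
        · filter_upwards [eventually_ge_atTop t₀] with t ht
          rw [Complex.div_ofReal_im, Real.norm_eq_abs, abs_div,
            abs_of_pos (h1r t), div_eq_mul_inv]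
          exact mul_le_mul_of_nonneg_right (hbd t ht) (inv_pos.mpr (h1r t)).le
        · simpa using tendsto_const_nhds.mul hinv0
      exact tendsto_nhds_unique h1 h2
    -- w.re = ± 1
    have habsre : |w.re| = 1 := by
      have : ‖w‖ = |w.re| := by
        rw [Complex.norm_def, Complex.normSq_apply, him]
        simp [← sq, Real.sqrt_sq_eq_abs]
      rw [← this]; exact heq1
    have hreconv : Tendsto (fun t => (z t).re / (1 + r t)) atTop (𝓝 w.re) := by
      have h1 : Tendsto (fun t => (z t / ((1 + r t : ℝ) : ℂ)).re) atTop (𝓝 w.re) :=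
        (Complex.continuous_re.tendsto _).comp hw'
      simpa only [Complex.div_ofReal_re] using h1
    rcases (abs_eq (by norm_num : (0:ℝ) ≤ 1)).1 habsre with h1 | h1
    · -- w.re = 1 : Re z → +∞
      have hretop : Tendsto (fun t => (z t).re) atTop atTop := by
        have hev : ∀ᶠ t in atTop, (1 + r t) / 2 ≤ (z t).re := by
          have : ∀ᶠ t in atTop, (1:ℝ)/2 < (z t).re / (1 + r t) := by
            rw [h1] at hreconv
            exact hreconv.eventually (eventually_gt_nhds (by norm_num))
          filter_upwards [this] with t ht
          have := (div_lt_div_iff₀ (by norm_num) (h1r t)).1 ht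
          linarith
        exact tendsto_atTop_mono' _ hev (h1rtop.atTop_div_const (by norm_num))
      refine Or.inl ⟨hretop, hretop.not_tendsto (disjoint_atTop_atBot), ?_⟩
      rintro ⟨l, hl⟩
      exact ((Complex.continuous_re.tendsto _).comp hl).not_tendsto
        (disjoint_nhds_atTop _) hretop
    · -- w.re = -1 : Re z → -∞
      have hrebot : Tendsto (fun t => (z t).re) atTop atBot := by
        have hev : ∀ᶠ t in atTop, (z t).re ≤ -((1 + r t) / 2) := by
          have : ∀ᶠ t in atTop, (z t).re / (1 + r t) < -(1/2 : ℝ) := by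
            rw [h1] at hreconv
            exact hreconv.eventually (eventually_lt_nhds (by norm_num))
          filter_upwards [this] with t ht
          have := (div_lt_iff₀ (h1r t)).1 ht
          linarith
        have hbot : Tendsto (fun t => -((1 + r t) / 2)) atTop atBot :=
          tendsto_neg_atBot_iff.mpr (h1rtop.atTop_div_const (by norm_num))
        exact tendsto_atBot_mono' _ hev hbot
      refine Or.inr (Or.inl ⟨hrebot, hrebot.not_tendsto (disjoint_atBot_atTop), ?_⟩)
      rintro ⟨l, hl⟩
      exact ((Complex.continuous_re.tendsto _).comp hl).not_tendsto
        (disjoint_nhds_atBot _) hrebot
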